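/- arXiv:2112.13267 — 2 statements merged into one kernel-verified Lean document; each statement's English description precedes it below -/
import Mathlib

section
/- The Jaccard distance δ(A, B) = 1 - |A ∩ B| / |A ∪ B| satisfies the triangle inequality: for finite sets A, B, C (all pairwise unions nonempty), δ(A, C) ≤ δ(A, B) + δ(B, C). -/
open scoped symmDiff

/-- Jaccard distance with the convention `δ(∅, ∅) = 0`. -/
noncomputable def jacDist (A B : Finset ℕ) : ℚ :=
  if A ∪ B = ∅ then 0 else 1 - ((A ∩ B).card : ℚ) / ((A ∪ B).card : ℚ)

private lemma key (a b c p q r : ℚ) (ha : 0 ≤ a) (hb : 0 ≤ b)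
    (hp : 0 ≤ p) (hr : 0 ≤ r)
    (h1 : c ≤ a + b) (h2 : q ≤ r + b) (h3 : q ≤ p + a)
    (d1 : 0 < p + r + c) (d2 : 0 < p + q + a) (d3 : 0 < q + r + b) :
    c / (p + r + c) ≤ a / (p + q + a) + b / (q + r + b) := by
  have dD : (0:ℚ) < p + r + a + b := by linarith
  calc c / (p + r + c) ≤ (a + b) / (p + r + a + b) := by
        rw [div_le_div_iff₀ d1 dD]
        nlinarith [mul_nonneg (by linarith : (0:ℚ) ≤ a + b - c) (by linarith : (0:ℚ) ≤ p + r)]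
    _ = a / (p + r + a + b) + b / (p + r + a + b) := add_div a b _
    _ ≤ a / (p + q + a) + b / (q + r + b) := by
        have e1 : a / (p + r + a + b) ≤ a / (p + q + a) :=
          div_le_div_of_nonneg_left ha d2 (by linarith)
        have e2 : b / (p + r + a + b) ≤ b / (q + r + b) :=
          div_le_div_of_nonneg_left hb d3 (by linarith)
        linarith

private lemma card_symmDiff_add (A B : Finset ℕ) :
    (A ∆ B).card + (A ∩ B).card = (A ∪ B).card := by
  rw [symmDiff_eq_sup_sdiff_inf]
  exact Finset.card_sdiff_add_card_eq_card Finset.inter_subset_union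

private lemma jac_eq (A B : Finset ℕ) (h : (A ∪ B).Nonempty) :
    jacDist A B = ((A ∆ B).card : ℚ) / ((A ∪ B).card : ℚ) := by
  have hne : A ∪ B ≠ ∅ := h.ne_empty
  have hu : (0:ℚ) < ((A ∪ B).card : ℚ) := by
    exact_mod_cast Finset.card_pos.mpr h
  rw [jacDist, if_neg hne]
  rw [eq_div_iff hu.ne', sub_mul, one_mul, div_mul_cancel₀ _ hu.ne']
  have := card_symmDiff_add A B
  have : ((A ∆ B).card : ℚ) + (A ∩ B).card = (A ∪ B).card := by exact_mod_cast this
  linarith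

private lemma card_le_card_add (B C : Finset ℕ) :
    (B.card : ℚ) ≤ C.card + (B ∆ C).card := by
  have hsub : B ⊆ C ∪ (B ∆ C) := by
    intro x hx; simp [Finset.mem_union, Finset.mem_symmDiff]; tauto
  have := (Finset.card_le_card hsub).trans (Finset.card_union_le _ _)
  exact_mod_cast this

theorem stmt_6 (A B C : Finset ℕ)
    (hAB : (A ∪ B).Nonempty) (hBC : (B ∪ C).Nonempty) (hAC : (A ∪ C).Nonempty) :
    jacDist A C ≤ jacDist A B + jacDist B C := by
  rw [jac_eq A B hAB, jac_eq B C hBC, jac_eq A C hAC]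
  have ca : ((A ∆ B).card : ℚ) + (A ∩ B).card = (A ∪ B).card := by
    exact_mod_cast card_symmDiff_add A B
  have cb : ((B ∆ C).card : ℚ) + (B ∩ C).card = (B ∪ C).card := by
    exact_mod_cast card_symmDiff_add B C
  have cc : ((A ∆ C).card : ℚ) + (A ∩ C).card = (A ∪ C).card := by
    exact_mod_cast card_symmDiff_add A C
  have ua : ((A ∪ B).card : ℚ) + (A ∩ B).card = A.card + B.card := by
    exact_mod_cast Finset.card_union_add_card_inter A B
  have ub : ((B ∪ C).card : ℚ) + (B ∩ C).card = B.card + C.card := by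
    exact_mod_cast Finset.card_union_add_card_inter B C
  have uc : ((A ∪ C).card : ℚ) + (A ∩ C).card = A.card + C.card := by
    exact_mod_cast Finset.card_union_add_card_inter A C
  have hUAB : ((A ∪ B).card : ℚ) = ((A.card : ℚ) + B.card + (A ∆ B).card) / 2 := by
    linarith
  have hUBC : ((B ∪ C).card : ℚ) = ((B.card : ℚ) + C.card + (B ∆ C).card) / 2 := by
    linarith
  have hUAC : ((A ∪ C).card : ℚ) = ((A.card : ℚ) + C.card + (A ∆ C).card) / 2 := by
    linarith
  have dAB : (0:ℚ) < (A.card : ℚ) + B.card + (A ∆ B).card := by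
    have h : (0:ℚ) < ((A ∪ B).card : ℚ) := by exact_mod_cast Finset.card_pos.mpr hAB
    rw [hUAB] at h; linarith
  have dBC : (0:ℚ) < (B.card : ℚ) + C.card + (B ∆ C).card := by
    have h : (0:ℚ) < ((B ∪ C).card : ℚ) := by exact_mod_cast Finset.card_pos.mpr hBC
    rw [hUBC] at h; linarith
  have dAC : (0:ℚ) < (A.card : ℚ) + C.card + (A ∆ C).card := by
    have h : (0:ℚ) < ((A ∪ C).card : ℚ) := by exact_mod_cast Finset.card_pos.mpr hAC
    rw [hUAC] at h; linarith
  have ha : (0:ℚ) ≤ ((A ∆ B).card : ℚ) := by positivity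
  have hb : (0:ℚ) ≤ ((B ∆ C).card : ℚ) := by positivity
  have hp : (0:ℚ) ≤ (A.card : ℚ) := by positivity
  have hr : (0:ℚ) ≤ (C.card : ℚ) := by positivity
  have htri : ((A ∆ C).card : ℚ) ≤ (A ∆ B).card + (B ∆ C).card := by
    have := (Finset.card_le_card (symmDiff_triangle A B C)).trans
      (Finset.card_union_le (A ∆ B) (B ∆ C))
    exact_mod_cast this
  have h2 : (B.card : ℚ) ≤ C.card + (B ∆ C).card := card_le_card_add B C
  have h3 : (B.card : ℚ) ≤ A.card + (A ∆ B).card := by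
    have := card_le_card_add B A
    rw [symmDiff_comm] at this
    linarith
  have hk := key ((A ∆ B).card : ℚ) ((B ∆ C).card : ℚ) ((A ∆ C).card : ℚ)
    (A.card : ℚ) (B.card : ℚ) (C.card : ℚ) ha hb hp hr htri h2 h3 dAC dAB dBC
  rw [hUAB, hUBC, hUAC, div_div_eq_mul_div, div_div_eq_mul_div, div_div_eq_mul_div,
    mul_comm _ (2:ℚ), mul_comm _ (2:ℚ), mul_comm _ (2:ℚ),
    mul_div_assoc, mul_div_assoc, mul_div_assoc]
  linarith
end

section
/- In the Set Cover reduction graph, adding the budget-b edge set {(t, x_i) : S_i ∈ A} to the isolated target node t yields |N²_{G'}(t)| = b + n if and only if A = {S_i} is a set cover of the universe U of size n. Consequently, the maximum achievable |N²_{G'}(t)| over all choices of b edges from t to X equals b + n exactly when a set cover of size b exists. -/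
/-- The 2-hop neighborhood of `t`: nodes other than `t` at shortest-path distance ≤ 2. -/
def twoHop {V : Type*} (G : SimpleGraph V) (t : V) : Set V :=
  {v | v ≠ t ∧ (G.Adj t v ∨ ∃ w, G.Adj t w ∧ G.Adj w v)}

/-- The Set-Cover reduction graph: bipartite graph between subset-nodes `x_i` and
element-nodes `y_j` with an edge iff `u_j ∈ S_i`, plus an extra target node `t = none`
joined to the subset-nodes indexed by `A`. -/
def redGraph {n m : ℕ} (S : Fin m → Finset (Fin n)) (A : Finset (Fin m)) :
    SimpleGraph (Option (Fin m ⊕ Fin n)) :=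
  SimpleGraph.fromRel (fun a b =>
    (∃ i j, a = some (Sum.inl i) ∧ b = some (Sum.inr j) ∧ j ∈ S i) ∨
    (∃ i, a = none ∧ b = some (Sum.inl i) ∧ i ∈ A))

lemma adj_none {n m : ℕ} (S : Fin m → Finset (Fin n)) (A : Finset (Fin m))
    (v : Option (Fin m ⊕ Fin n)) :
    (redGraph S A).Adj none v ↔ ∃ i ∈ A, v = some (Sum.inl i) := by
  simp only [redGraph, SimpleGraph.fromRel_adj]
  aesop

lemma adj_inl {n m : ℕ} (S : Fin m → Finset (Fin n)) (A : Finset (Fin m))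
    (i : Fin m) (v : Option (Fin m ⊕ Fin n)) :
    (redGraph S A).Adj (some (Sum.inl i)) v ↔
      (v = none ∧ i ∈ A) ∨ ∃ j ∈ S i, v = some (Sum.inr j) := by
  simp only [redGraph, SimpleGraph.fromRel_adj]
  aesop

theorem stmt_10 (n m b : ℕ) (S : Fin m → Finset (Fin n)) :
    (∀ A : Finset (Fin m), A.card = b →
      ((twoHop (redGraph S A) none).ncard = b + n ↔ ∀ u : Fin n, ∃ i ∈ A, u ∈ S i)) ∧
    ((∃ A : Finset (Fin m), A.card = b ∧
        (twoHop (redGraph S A) none).ncard = b + n) ↔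
      (∃ A : Finset (Fin m), A.card = b ∧ ∀ u : Fin n, ∃ i ∈ A, u ∈ S i)) := by
  classical
  have key : ∀ A : Finset (Fin m), A.card = b →
      ((twoHop (redGraph S A) none).ncard = b + n ↔ ∀ u : Fin n, ∃ i ∈ A, u ∈ S i) := by
    intro A hA
    set C : Finset (Fin n) := Finset.univ.filter (fun j => ∃ i ∈ A, j ∈ S i) with hC
    have hset : twoHop (redGraph S A) none =
        ↑(A.image (fun i => (some (Sum.inl i) : Option (Fin m ⊕ Fin n))) ∪
          C.image (fun j => (some (Sum.inr j) : Option (Fin m ⊕ Fin n)))) := by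
      ext v
      simp only [twoHop, Set.mem_setOf_eq, Finset.coe_union, Set.mem_union,
        Finset.coe_image, Set.mem_image, Finset.mem_coe, hC, Finset.mem_filter,
        Finset.mem_univ, true_and]
      constructor
      · rintro ⟨hv, h | ⟨w, hw, hwv⟩⟩
        · obtain ⟨i, hi, rfl⟩ := (adj_none S A v).mp h
          exact Or.inl ⟨i, hi, rfl⟩
        · obtain ⟨i, hi, rfl⟩ := (adj_none S A w).mp hw
          rcases (adj_inl S A i v).mp hwv with ⟨rfl, -⟩ | ⟨j, hj, rfl⟩
          · exact absurd rfl hv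
          · exact Or.inr ⟨j, ⟨i, hi, hj⟩, rfl⟩
      · rintro (⟨i, hi, rfl⟩ | ⟨j, ⟨i, hiA, hjS⟩, rfl⟩)
        · exact ⟨by simp, Or.inl ((adj_none S A _).mpr ⟨i, hi, rfl⟩)⟩
        · exact ⟨by simp, Or.inr ⟨some (Sum.inl i), (adj_none S A _).mpr ⟨i, hiA, rfl⟩,
            (adj_inl S A i _).mpr (Or.inr ⟨j, hjS, rfl⟩)⟩⟩
    have hdisj : Disjoint (A.image (fun i => (some (Sum.inl i) : Option (Fin m ⊕ Fin n))))
        (C.image (fun j => (some (Sum.inr j) : Option (Fin m ⊕ Fin n)))) := by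
      simp [Finset.disjoint_left]
    have hcard : (twoHop (redGraph S A) none).ncard = b + C.card := by
      rw [hset, Set.ncard_coe_finset, Finset.card_union_of_disjoint hdisj,
        Finset.card_image_of_injective _ (by intro a b h; simpa using h),
        Finset.card_image_of_injective _ (by intro a b h; simpa using h), hA]
    rw [hcard]
    constructor
    · intro h
      have hCn : C.card = n := by omega
      have huniv : C = Finset.univ := Finset.eq_univ_of_card _ (by simp [hCn])
      intro u
      have hu : u ∈ C := huniv ▸ Finset.mem_univ u
      simpa [hC] using hu
    · intro h
      have huniv : C = Finset.univ := Finset.eq_univ_iff_forall.mpr (by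
        intro u; simp only [hC, Finset.mem_filter, Finset.mem_univ, true_and]; exact h u)
      rw [huniv]
      simp
  refine ⟨key, ?_⟩
  constructor
  · rintro ⟨A, hA, h⟩; exact ⟨A, hA, (key A hA).mp h⟩
  · rintro ⟨A, hA, h⟩; exact ⟨A, hA, (key A hA).mpr h⟩
end
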